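/- Call a sequence (U_n)_{n≥1} of nonnegative integers exactly realizable if for every n ≥ 1 the sum ∑_{d ∣ n} μ(n/d) U_d is nonnegative and divisible by n. If a, b are positive integers and U_1 = a, U_2 = b, U_{n+2} = U_{n+1} + U_n defines an exactly realizable sequence, then b = 3a. -/

import Mathlib

open Finset

/-- Lucas numbers as integers. -/
def Lu (n : ℕ) : ℤ := 2 * Nat.fib (n + 1) - Nat.fib n

lemma Lu_one : Lu 1 = 1 := by simp [Lu]
lemma Lu_two : Lu 2 = 3 := by norm_num [Lu, show Nat.fib 3 = 2 from rfl]

lemma Lu_rec (n : ℕ) : Lu (n + 2) = Lu (n + 1) + Lu n := by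
  simp only [Lu, Nat.fib_add_two]
  push_cast
  ring

lemma fib_sq (n : ℕ) :
    (Nat.fib (n+1) : ℤ)^2 - (Nat.fib (n+1) : ℤ) * Nat.fib n - (Nat.fib n : ℤ)^2 = (-1)^n := by
  induction n with
  | zero => simp
  | succ n ih =>
    have h : (Nat.fib (n+2) : ℤ) = Nat.fib (n+1) + Nat.fib n := by
      rw [Nat.fib_add_two]; push_cast; ring
    rw [h, show ((-1:ℤ))^(n+1) = -(-1)^n by ring]
    linear_combination -ih

lemma fib_two_mul_int (m : ℕ) : (Nat.fib (2*m) : ℤ) = (Nat.fib m : ℤ) * Lu m := by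
  have h : Nat.fib m ≤ 2 * Nat.fib (m+1) := by
    have := Nat.fib_le_fib_succ (n := m); omega
  have h2 := Nat.fib_two_mul m
  zify [h] at h2
  rw [h2, Lu]

lemma Lu_two_mul (m : ℕ) : Lu (2*m) = Lu m ^ 2 - 2 * (-1)^m := by
  have h1 := fib_two_mul_int m
  have h2 : (Nat.fib (2*m+1) : ℤ) = (Nat.fib (m+1) : ℤ)^2 + (Nat.fib m : ℤ)^2 := by
    have := Nat.fib_two_mul_add_one m; exact_mod_cast this
  simp only [Lu] at h1 ⊢
  rw [h2, h1]
  linear_combination -2 * fib_sq m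

lemma mu_sum_pow2 (U : ℕ → ℕ) (m : ℕ) :
    ∑ d ∈ (2^(m+1)).divisors, (ArithmeticFunction.moebius ((2^(m+1)) / d) : ℤ) * (U d : ℤ)
      = (U (2^(m+1)) : ℤ) - U (2^m) := by
  rw [Nat.sum_divisors_prime_pow Nat.prime_two]
  have key : ∀ i ∈ Finset.range (m+2),
      (ArithmeticFunction.moebius ((2^(m+1)) / 2^i) : ℤ) * (U (2^i) : ℤ)
        = (ArithmeticFunction.moebius (2^(m+1-i)) : ℤ) * (U (2^i) : ℤ) := by
    intro i hi
    rw [Finset.mem_range] at hi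
    rw [Nat.pow_div (by omega) (by norm_num)]
  rw [Finset.sum_congr rfl key]
  rw [Finset.sum_range_succ, Finset.sum_range_succ]
  have h0 : ∀ i ∈ Finset.range m,
      (ArithmeticFunction.moebius (2^(m+1-i)) : ℤ) * (U (2^i) : ℤ) = 0 := by
    intro i hi
    rw [Finset.mem_range] at hi
    rw [ArithmeticFunction.moebius_apply_prime_pow Nat.prime_two (by omega),
      if_neg (by omega)]
    simp
  rw [Finset.sum_eq_zero h0]
  rw [show m + 1 - m = 1 by omega, show m + 1 - (m+1) = 0 by omega]
  rw [pow_one, pow_zero, ArithmeticFunction.moebius_apply_prime Nat.prime_two,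
    ArithmeticFunction.moebius_apply_one]
  ring

lemma odd_fib_Lu_pow2 (k : ℕ) : Odd (Nat.fib (2^k) : ℤ) ∧ Odd (Lu (2^k)) := by
  induction k with
  | zero => simp [Lu]
  | succ k ih =>
    obtain ⟨hf, hl⟩ := ih
    have h2 : 2^(k+1) = 2 * 2^k := by ring
    constructor
    · rw [h2, fib_two_mul_int]
      exact hf.mul hl
    · rw [h2, Lu_two_mul]
      have : Even (2 * (-1:ℤ)^(2^k)) := ⟨(-1)^(2^k), by ring⟩
      exact (Odd.pow hl).sub_even this

lemma neg_one_pow_two_pow (k : ℕ) (hk : 1 ≤ k) : ((-1:ℤ))^(2^k) = 1 := by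
  have : Even (2^k) := Nat.even_pow.mpr ⟨even_two, by omega⟩
  exact Even.neg_one_pow this

lemma Lu_pow2_succ (k : ℕ) (hk : 1 ≤ k) : Lu (2^(k+1)) = Lu (2^k) ^ 2 - 2 := by
  rw [show 2^(k+1) = 2 * 2^k by ring, Lu_two_mul, neg_one_pow_two_pow k hk]
  ring

lemma Lu_pow2_mod (k : ℕ) (hk : 1 ≤ k) : (2:ℤ)^(k+1) ∣ Lu (2^k) + 1 := by
  induction k with
  | zero => omega
  | succ k ih =>
    rcases Nat.eq_or_lt_of_le hk with h1 | h1
    · rw [show k + 1 = 1 by omega]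
      norm_num [Lu_two]
    · have hk' : 1 ≤ k := by omega
      have ih' := ih hk'
      rw [Lu_pow2_succ k hk']
      have : Lu (2^k) ^ 2 - 2 + 1 = (Lu (2^k) + 1) * (Lu (2^k) + 1) - 2 * (Lu (2^k) + 1) := by
        ring
      rw [this]
      rcases ih' with ⟨t, ht⟩
      exact ⟨2^k * t^2 - t, by rw [ht]; ring⟩

theorem realizable_fib_recurrence (a b : ℕ) (ha : 0 < a) (hb : 0 < b)
    (U : ℕ → ℕ) (hU1 : U 1 = a) (hU2 : U 2 = b)
    (hrec : ∀ n, 1 ≤ n → U (n + 2) = U (n + 1) + U n)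
    (hreal : ∀ n, 1 ≤ n →
      0 ≤ ∑ d ∈ n.divisors, (ArithmeticFunction.moebius (n / d) : ℤ) * (U d : ℤ) ∧
      (n : ℤ) ∣ ∑ d ∈ n.divisors, (ArithmeticFunction.moebius (n / d) : ℤ) * (U d : ℤ)) :
    b = 3 * a := by
  -- the key representation 2 U_n = (b-a) L_n + (3a-b) F_n for n ≥ 1
  have key : ∀ n, 2 * (U (n+1) : ℤ)
      = ((b:ℤ) - a) * Lu (n+1) + (3*(a:ℤ) - b) * Nat.fib (n+1) ∧
      2 * (U (n+2) : ℤ) = ((b:ℤ) - a) * Lu (n+2) + (3*(a:ℤ) - b) * Nat.fib (n+2) := by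
    intro n
    induction n with
    | zero =>
      constructor
      · rw [hU1, Lu_one]; simp; ring
      · rw [hU2, Lu_two]; norm_num; ring
    | succ n ih =>
      obtain ⟨ih1, ih2⟩ := ih
      refine ⟨ih2, ?_⟩
      rw [hrec (n+1) (by omega)]
      rw [Lu_rec, Nat.fib_add_two]
      push_cast
      linarith [ih1, ih2]
  have keyU : ∀ n, 1 ≤ n → 2 * (U n : ℤ)
      = ((b:ℤ) - a) * Lu n + (3*(a:ℤ) - b) * Nat.fib n := by
    intro n hn
    rcases Nat.exists_eq_add_of_le hn with ⟨m, rfl⟩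
    rw [Nat.add_comm 1 m]
    exact (key m).1
  -- divisibility at powers of two
  have hdvd : ∀ k : ℕ, (2:ℤ)^(k+1) ∣ (U (2^(k+1)) : ℤ) - U (2^k) := by
    intro k
    have h := (hreal (2^(k+1)) (Nat.one_le_pow _ _ (by norm_num))).2
    rw [mu_sum_pow2 U k] at h
    push_cast at h
    exact h
  -- even difference
  have heven : (2:ℤ) ∣ (b:ℤ) - a := by
    have h := hdvd 0
    norm_num at h
    rw [hU2, hU1] at h
    exact h
  -- main divisibility: 2^(k+1) ∣ 3a - b for all k ≥ 1
  have hmain : ∀ k : ℕ, 1 ≤ k → (2:ℤ)^(k+1) ∣ 3*(a:ℤ) - b := by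
    intro k hk
    have h := hdvd k
    have h2 : (2:ℤ)^(k+2) ∣ 2 * ((U (2^(k+1)) : ℤ) - U (2^k)) := by
      rcases h with ⟨t, ht⟩
      exact ⟨t, by rw [ht]; ring⟩
    have hexp : 2 * ((U (2^(k+1)) : ℤ) - U (2^k))
        = ((b:ℤ) - a) * (Lu (2^(k+1)) - Lu (2^k))
          + (3*(a:ℤ) - b) * ((Nat.fib (2^(k+1)) : ℤ) - Nat.fib (2^k)) := by
      rw [mul_sub, keyU (2^(k+1)) (Nat.one_le_pow _ _ (by norm_num)),
        keyU (2^k) (Nat.one_le_pow _ _ (by norm_num))]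
      ring
    -- the Lucas part is divisible by 2^(k+2)
    have hLdvd : (2:ℤ)^(k+2) ∣ ((b:ℤ) - a) * (Lu (2^(k+1)) - Lu (2^k)) := by
      have h1 : (2:ℤ)^(k+1) ∣ Lu (2^(k+1)) - Lu (2^k) := by
        rw [Lu_pow2_succ k hk]
        have : Lu (2^k) ^ 2 - 2 - Lu (2^k) = (Lu (2^k) + 1) * (Lu (2^k) - 2) := by ring
        rw [this]
        exact Dvd.dvd.mul_right (Lu_pow2_mod k hk) _
      rcases heven with ⟨s, hs⟩
      rcases h1 with ⟨t, ht⟩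
      exact ⟨s * t, by rw [hs, ht]; ring⟩
    -- the Fibonacci part: F_{2^{k+1}} - F_{2^k} = 2 * odd
    obtain ⟨w, hw, hwodd⟩ : ∃ w : ℤ, (Nat.fib (2^(k+1)) : ℤ) - Nat.fib (2^k) = 2 * w ∧ Odd w := by
      have hf : (Nat.fib (2^(k+1)) : ℤ) = (Nat.fib (2^k) : ℤ) * Lu (2^k) := by
        rw [show 2^(k+1) = 2 * 2^k by ring, fib_two_mul_int]
      obtain ⟨t, ht⟩ := Lu_pow2_mod k hk
      have hL1 : Lu (2^k) - 1 = 2 * (2^k * t - 1) := by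
        have : Lu (2^k) = 2^(k+1) * t - 1 := by omega
        rw [this]; ring
      refine ⟨(Nat.fib (2^k) : ℤ) * (2^k * t - 1), ?_, ?_⟩
      · rw [hf]
        have : (Nat.fib (2^k) : ℤ) * Lu (2^k) - Nat.fib (2^k)
            = (Nat.fib (2^k) : ℤ) * (Lu (2^k) - 1) := by ring
        rw [this, hL1]; ring
      · have hfo := (odd_fib_Lu_pow2 k).1
        refine hfo.mul ?_
        have : (2:ℤ)^k * t - 1 = 2 * (2^(k-1) * t) - 1 := by
          rw [show (2:ℤ)^k = 2 * 2^(k-1) by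
            rw [← pow_succ']
            congr 1
            omega]
          ring
        exact ⟨2^(k-1) * t - 1, by rw [this]; ring⟩
    -- combine
    have hFdvd : (2:ℤ)^(k+2) ∣ (3*(a:ℤ) - b) * (2 * w) := by
      have hsum : (2:ℤ)^(k+2) ∣ ((b:ℤ) - a) * (Lu (2^(k+1)) - Lu (2^k))
          + (3*(a:ℤ) - b) * (2 * w) := by
        rw [← hw, ← hexp]
        exact h2
      exact (dvd_add_right hLdvd).mp hsum
    have hFdvd' : (2:ℤ)^(k+1) ∣ (3*(a:ℤ) - b) * w := by
      rcases hFdvd with ⟨t, ht⟩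
      refine ⟨t, ?_⟩
      have h2' : (2:ℤ) * ((3*(a:ℤ) - b) * w) = 2 * (2^(k+1) * t) := by
        linear_combination ht
      exact mul_left_cancel₀ two_ne_zero h2'
    -- w is odd, hence coprime to 2
    have hcop : IsCoprime ((2:ℤ)^(k+1)) w := by
      rcases hwodd with ⟨u, hu⟩
      have : IsCoprime (2:ℤ) w := ⟨-u, 1, by rw [hu]; ring⟩
      exact this.pow_left
    exact hcop.dvd_of_dvd_mul_right hFdvd'
  -- conclude 3a - b = 0
  have hzero : 3*(a:ℤ) - b = 0 := by
    by_contra hne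
    set k := (3*(a:ℤ) - b).natAbs with hkdef
    have hk : 0 < k := Int.natAbs_pos.mpr hne
    have hd := hmain k hk
    have hle : (2:ℤ)^(k+1) ≤ |3*(a:ℤ) - b| :=
      Int.le_of_dvd (abs_pos.mpr hne) ((dvd_abs _ _).mpr hd)
    have habs : |3*(a:ℤ) - b| = (k:ℤ) := Int.abs_eq_natAbs _
    have hlt : (k:ℤ) < (2:ℤ)^(k+1) := by
      have h1 : k < 2^(k+1) := by
        calc k < 2^k := Nat.lt_two_pow_self
        _ ≤ 2^(k+1) := Nat.pow_le_pow_right (by norm_num) (by omega)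
      exact_mod_cast h1
    rw [habs] at hle
    linarith
  omega
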